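/- arXiv:math/0703389 — 2 statements merged into one kernel-verified Lean document; each statement's English description precedes it below -/
import Mathlib

section
/- Let 𝔤 be a finite-dimensional real Lie algebra with an ad-invariant inner product, let X ∈ 𝔤, and let f : ℝ → 𝔤 be a twice continuously differentiable solution of f''(t) = (1/4)⁅X, ⁅X, f(t)⁆⁆. Then f is bounded in norm on [0, ∞) if and only if the orthogonal projection of f'(0) onto the kernel of ad_X is zero (i.e. f'(0) is orthogonal to every w ∈ 𝔤 with ⁅X, w⁆ = 0). -/
open scoped RealInnerProductSpace

set_option maxHeartbeats 1000000 in
set_option synthInstance.maxHeartbeats 400000 in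
/-- Let `𝕘` be a finite-dimensional real Lie algebra with an
ad-invariant inner product, `X ∈ 𝕘`, and `f : ℝ → 𝕘` a `C²` solution of
`f'' t = (1/4) ⁅X, ⁅X, f t⁆⁆`.  Then `f` is bounded in norm on `[0, ∞)` iff the
orthogonal projection of `f' 0` onto `ker (ad_X)` vanishes. -/
theorem jacobi_bounded_iff_proj_deriv_zero
    {𝕘 : Type*} [NormedAddCommGroup 𝕘] [InnerProductSpace ℝ 𝕘] [FiniteDimensional ℝ 𝕘]
    (bracket : 𝕘 →ₗ[ℝ] 𝕘 →ₗ[ℝ] 𝕘)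
    (bracket_alt : ∀ x : 𝕘, bracket x x = 0)
    (bracket_jacobi : ∀ x y z : 𝕘,
      bracket x (bracket y z) + bracket y (bracket z x) + bracket z (bracket x y) = 0)
    (ad_invariant : ∀ Z X Y : 𝕘, ⟪bracket Z X, Y⟫ + ⟪X, bracket Z Y⟫ = 0)
    (X : 𝕘) (f : ℝ → 𝕘)
    (hf : ContDiff ℝ 2 f)
    (hJacobi : ∀ t : ℝ, deriv (deriv f) t = (1/4 : ℝ) • bracket X (bracket X (f t))) :
    (∃ C : ℝ, ∀ t : ℝ, 0 ≤ t → ‖f t‖ ≤ C) ↔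
      Submodule.orthogonalProjection (LinearMap.ker (bracket X)) (deriv f 0) = 0 := by
  classical
  set A : 𝕘 →ₗ[ℝ] 𝕘 := bracket X with hAdef
  have skew : ∀ u v : 𝕘, ⟪A u, v⟫ = -⟪u, A v⟫ := by
    intro u v
    have := ad_invariant X u v
    linarith
  set K : Submodule ℝ 𝕘 := LinearMap.ker A with hKdef
  let Ac : 𝕘 →L[ℝ] 𝕘 := LinearMap.toContinuousLinearMap A
  have hAc : ∀ v : 𝕘, Ac v = A v := fun v => rfl
  let Q : 𝕘 →L[ℝ] 𝕘 := K.subtypeL.comp (Submodule.orthogonalProjection K)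
  have hQ : ∀ v : 𝕘, Q v = (Submodule.orthogonalProjection K v : 𝕘) := fun v => rfl
  have hQmem : ∀ v : 𝕘, Q v ∈ K := fun v => (Submodule.orthogonalProjection K v).2
  have hAQ : ∀ v : 𝕘, A (Q v) = 0 := fun v => (LinearMap.mem_ker).1 (hQmem v)
  -- A ∘ A maps into Kᗮ
  have hA2perp : ∀ v : 𝕘, A (A v) ∈ Kᗮ := by
    intro v
    rw [Submodule.mem_orthogonal]
    intro u hu
    have hu0 : A u = 0 := (LinearMap.mem_ker).1 hu
    have h1 : ⟪A (A v), u⟫ = -⟪A v, A u⟫ := skew _ _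
    rw [hu0, inner_zero_right] at h1
    rw [real_inner_comm, h1]
    ring
  have hQA2 : ∀ v : 𝕘, Q (A (A v)) = 0 := by
    intro v
    rw [hQ, Submodule.orthogonalProjectionOnto_apply_of_mem_orthogonal (hA2perp v)]
    simp
  -- differentiability facts
  have hdf : Differentiable ℝ f := hf.differentiable (by norm_num)
  have hf1 : ContDiff ℝ 1 (deriv f) := by
    have h2 : ContDiff ℝ ((1 : ℕ) + 1) f := by exact_mod_cast hf
    exact (contDiff_succ_iff_deriv.1 h2).2.2
  have hdf' : Differentiable ℝ (deriv f) := hf1.differentiable one_ne_zero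
  -- the projected part g
  set g : ℝ → 𝕘 := fun t => Q (f t) with hgdef
  have hdg : ∀ t, HasDerivAt g (Q (deriv f t)) t := fun t =>
    Q.hasFDerivAt.comp_hasDerivAt t (hdf t).hasDerivAt
  have hderivg : deriv g = fun t => Q (deriv f t) := funext fun t => (hdg t).deriv
  have hdg2 : ∀ t : ℝ, HasDerivAt (deriv g) 0 t := by
    intro t
    rw [hderivg]
    have : HasDerivAt (fun t => Q (deriv f t)) (Q (deriv (deriv f) t)) t :=
      Q.hasFDerivAt.comp_hasDerivAt t (hdf' t).hasDerivAt
    have hz : Q (deriv (deriv f) t) = 0 := by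
      rw [hJacobi t, map_smul, hQA2, smul_zero]
    rwa [hz] at this
  -- g is affine : g t = g 0 + t • c with c = Q (deriv f 0)
  set c : 𝕘 := Q (deriv f 0) with hcdef
  have hderivg_const : ∀ t : ℝ, deriv g t = c := by
    intro t
    have hconst : deriv g t = deriv g 0 :=
      is_const_of_deriv_eq_zero (fun s => (hdg2 s).differentiableAt)
        (fun s => (hdg2 s).deriv) t 0
    rw [hconst, hderivg]
  have haffine : ∀ t : ℝ, g t = g 0 + t • c := by
    intro t
    have hφ : ∀ s : ℝ, HasDerivAt (fun s : ℝ => g s - s • c) 0 s := by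
      intro s
      have h1 : HasDerivAt g c s := by
        have := (hdg s)
        rwa [show Q (deriv f s) = c from by rw [← (hdg s).deriv, hderivg_const]] at this
      have h2 : HasDerivAt (fun s : ℝ => s • c) c s := by
        simpa using (hasDerivAt_id s).smul_const c
      have h3 : HasDerivAt (fun s : ℝ => g s - s • c) (c - c) s := h1.sub h2
      rwa [sub_self] at h3
    have := is_const_of_deriv_eq_zero (f := fun s : ℝ => g s - s • c)
      (fun s => (hφ s).differentiableAt) (fun s => (hφ s).deriv) t 0
    simp only [zero_smul, sub_zero] at this
    have := this
    linear_combination (norm := abel) this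
  -- the orthogonal part h
  set h : ℝ → 𝕘 := fun t => f t - g t with hhdef
  have hmem : ∀ t, h t ∈ Kᗮ := fun t => Submodule.sub_starProjection_mem_orthogonal (K := K) (f t)
  have hdh : ∀ t, HasDerivAt h (deriv f t - Q (deriv f t)) t := fun t =>
    (hdf t).hasDerivAt.sub (hdg t)
  have hderivh : deriv h = fun t => deriv f t - Q (deriv f t) :=
    funext fun t => (hdh t).deriv
  have hAg : ∀ t, A (g t) = 0 := fun t => hAQ (f t)
  have hdh2 : ∀ t : ℝ, HasDerivAt (deriv h) ((1/4 : ℝ) • A (A (h t))) t := by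
    intro t
    rw [hderivh]
    have h1 : HasDerivAt (fun s => deriv f s - Q (deriv f s))
        (deriv (deriv f) t - Q (deriv (deriv f) t)) t :=
      (hdf' t).hasDerivAt.sub (Q.hasFDerivAt.comp_hasDerivAt t (hdf' t).hasDerivAt)
    have hz : Q (deriv (deriv f) t) = 0 := by
      rw [hJacobi t, map_smul, hQA2, smul_zero]
    have hval : deriv (deriv f) t - Q (deriv (deriv f) t) = (1/4 : ℝ) • A (A (h t)) := by
      rw [hz, sub_zero, hJacobi t]
      have : f t = h t + g t := by simp [hhdef]
      rw [show bracket X (bracket X (f t)) = A (A (f t)) from rfl, this, map_add, map_add,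
        hAg t, map_zero, add_zero]
    rwa [hval] at h1
  -- energy conservation
  set E : ℝ → ℝ := fun t => ⟪deriv h t, deriv h t⟫ + (1/4 : ℝ) * ⟪A (h t), A (h t)⟫
    with hEdef
  have hE : ∀ t : ℝ, HasDerivAt E 0 t := by
    intro t
    have d1 : HasDerivAt h (deriv h t) t := (hdh t).differentiableAt.hasDerivAt
    have d2 : HasDerivAt (deriv h) ((1/4 : ℝ) • A (A (h t))) t := hdh2 t
    have e1 : HasDerivAt (fun s => ⟪deriv h s, deriv h s⟫)
        (⟪deriv h t, (1/4 : ℝ) • A (A (h t))⟫ + ⟪(1/4 : ℝ) • A (A (h t)), deriv h t⟫) t :=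
      d2.inner ℝ d2
    have dAh : HasDerivAt (fun s => Ac (h s)) (Ac (deriv h t)) t :=
      Ac.hasFDerivAt.comp_hasDerivAt t d1
    have e2 : HasDerivAt (fun s => ⟪Ac (h s), Ac (h s)⟫)
        (⟪Ac (h t), Ac (deriv h t)⟫ + ⟪Ac (deriv h t), Ac (h t)⟫) t := dAh.inner ℝ dAh
    have e3 : HasDerivAt (fun s => (1/4 : ℝ) * ⟪Ac (h s), Ac (h s)⟫)
        ((1/4 : ℝ) * (⟪Ac (h t), Ac (deriv h t)⟫ + ⟪Ac (deriv h t), Ac (h t)⟫)) t :=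
      e2.const_mul _
    have esum := e1.add e3
    have hzero : ⟪deriv h t, (1/4 : ℝ) • A (A (h t))⟫ + ⟪(1/4 : ℝ) • A (A (h t)), deriv h t⟫
        + (1/4 : ℝ) * (⟪Ac (h t), Ac (deriv h t)⟫ + ⟪Ac (deriv h t), Ac (h t)⟫) = 0 := by
      simp only [hAc]
      have s1 : ⟪A (deriv h t), A (h t)⟫ = -⟪deriv h t, A (A (h t))⟫ := skew _ _
      have s2 : ⟪A (h t), A (deriv h t)⟫ = ⟪A (deriv h t), A (h t)⟫ := real_inner_comm _ _
      have s3 : ⟪(1/4 : ℝ) • A (A (h t)), deriv h t⟫ = (1/4 : ℝ) * ⟪A (A (h t)), deriv h t⟫ :=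
        real_inner_smul_left _ _ _
      have s4 : ⟪deriv h t, (1/4 : ℝ) • A (A (h t))⟫ = (1/4 : ℝ) * ⟪deriv h t, A (A (h t))⟫ :=
        real_inner_smul_right _ _ _
      have s5 : ⟪A (A (h t)), deriv h t⟫ = ⟪deriv h t, A (A (h t))⟫ := real_inner_comm _ _
      rw [s3, s4, s5, s2, s1]
      ring
    have : HasDerivAt (fun s => ⟪deriv h s, deriv h s⟫ + (1/4 : ℝ) * ⟪Ac (h s), Ac (h s)⟫)
        0 t := by rwa [hzero] at esum
    simpa only [hEdef, hAc] using this
  have hEconst : ∀ t : ℝ, E t = E 0 := fun t =>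
    is_const_of_deriv_eq_zero (fun s => (hE s).differentiableAt) (fun s => (hE s).deriv) t 0
  -- h is bounded
  have hAhbound : ∀ t : ℝ, ‖A (h t)‖ ≤ Real.sqrt (4 * E 0) := by
    intro t
    have h1 : (1/4 : ℝ) * ⟪A (h t), A (h t)⟫ ≤ E 0 := by
      have h0 := hEconst t
      have hrfl : E t = ⟪deriv h t, deriv h t⟫ + (1/4 : ℝ) * ⟪A (h t), A (h t)⟫ := rfl
      rw [hrfl] at h0
      have hnn : (0 : ℝ) ≤ ⟪deriv h t, deriv h t⟫ := real_inner_self_nonneg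
      linarith
    rw [real_inner_self_eq_norm_sq] at h1
    have h1' : (1/4 : ℝ) * ‖A (h t)‖ ^ 2 ≤ E 0 := h1
    have h2 : ‖A (h t)‖ ^ 2 ≤ 4 * E 0 := by 
      have h4 := mul_le_mul_of_nonneg_left h1' (by norm_num : (0:ℝ) ≤ 4)
      calc ‖A (h t)‖ ^ 2 = 4 * (1/4 * ‖A (h t)‖ ^ 2) := by ring
      _ ≤ 4 * E 0 := h4
    nlinarith [Real.sq_sqrt (le_trans (by positivity) h2 : (0:ℝ) ≤ 4 * E 0),
      Real.sqrt_nonneg (4 * E 0), norm_nonneg (A (h t))]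
  -- A is bounded below on Kᗮ
  obtain ⟨c0, hc0nn, hc0⟩ : ∃ c0 : ℝ, 0 ≤ c0 ∧ ∀ v : 𝕘, v ∈ Kᗮ → ‖v‖ ≤ c0 * ‖A v‖ := by
    let T : Kᗮ →ₗ[ℝ] 𝕘 := A.comp (Kᗮ).subtype
    have hinj : Function.Injective T := by
      rw [← LinearMap.ker_eq_bot, Submodule.eq_bot_iff]
      rintro ⟨v, hv⟩ hvk
      have hv0 : A v = 0 := hvk
      have hvK : v ∈ K := (LinearMap.mem_ker).2 hv0
      have : ⟪v, v⟫ = 0 := (Submodule.mem_orthogonal K v).1 hv v hvK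
      have : v = 0 := by
        rwa [real_inner_self_eq_norm_sq, pow_eq_zero_iff (by norm_num), norm_eq_zero] at this
      exact Subtype.ext this
    let e : Kᗮ ≃ₗ[ℝ] LinearMap.range T := LinearEquiv.ofInjective T hinj
    let e' : Kᗮ ≃L[ℝ] LinearMap.range T := e.toContinuousLinearEquiv
    refine ⟨‖(e'.symm : LinearMap.range T →L[ℝ] Kᗮ)‖, ContinuousLinearMap.opNorm_nonneg _, ?_⟩
    intro v hv
    have key : ‖(⟨v, hv⟩ : Kᗮ)‖ ≤ ‖(e'.symm : LinearMap.range T →L[ℝ] Kᗮ)‖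
        * ‖e' (⟨v, hv⟩ : Kᗮ)‖ := by
      have := (e'.symm : LinearMap.range T →L[ℝ] Kᗮ).le_opNorm (e' (⟨v, hv⟩ : Kᗮ))
      simpa using this
    have hnorm1 : ‖(⟨v, hv⟩ : Kᗮ)‖ = ‖v‖ := rfl
    have hnorm2 : ‖e' (⟨v, hv⟩ : Kᗮ)‖ = ‖A v‖ := by
      have : ((e' (⟨v, hv⟩ : Kᗮ)) : 𝕘) = A v := rfl
      rw [← this]
      rfl
    rw [hnorm1, hnorm2] at key
    exact key
  set M : ℝ := c0 * Real.sqrt (4 * E 0) with hMdef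
  have hhbound : ∀ t : ℝ, ‖h t‖ ≤ M := by
    intro t
    calc ‖h t‖ ≤ c0 * ‖A (h t)‖ := hc0 (h t) (hmem t)
    _ ≤ c0 * Real.sqrt (4 * E 0) := by
        exact mul_le_mul_of_nonneg_left (hAhbound t) hc0nn
  -- ‖g t‖ ≤ ‖f t‖
  have horth : ∀ t : ℝ, ⟪g t, h t⟫ = 0 := fun t =>
    (Submodule.mem_orthogonal K (h t)).1 (hmem t) (g t) (hQmem (f t))
  have hgle : ∀ t : ℝ, ‖g t‖ ≤ ‖f t‖ := by
    intro t
    have hsplit : f t = g t + h t := by simp [hhdef]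
    have := norm_add_sq_real (g t) (h t)
    rw [← hsplit, horth t] at this
    nlinarith [norm_nonneg (g t), norm_nonneg (f t), norm_nonneg (h t)]
  constructor
  · rintro ⟨C, hC⟩
    have hCnn : (0 : ℝ) ≤ C := le_trans (norm_nonneg (f 0)) (hC 0 le_rfl)
    have hc : c = 0 := by
      by_contra hne
      have hcpos : 0 < ‖c‖ := norm_pos_iff.2 hne
      set t : ℝ := (C + ‖g 0‖ + 1) / ‖c‖ with htdef
      have ht : 0 ≤ t := by positivity
      have h1 : ‖g t‖ ≤ C := le_trans (hgle t) (hC t ht)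
      have h2 : g t = g 0 + t • c := haffine t
      have h3 : ‖t • c‖ - ‖g 0‖ ≤ ‖g 0 + t • c‖ := by
        have := norm_add_le (g 0 + t • c) (-(g 0))
        simp only [add_neg_cancel_comm, norm_neg] at this
        linarith
      have h4 : ‖t • c‖ = t * ‖c‖ := by
        rw [norm_smul, Real.norm_eq_abs, abs_of_nonneg ht]
      have h5 : t * ‖c‖ = C + ‖g 0‖ + 1 := by
        rw [htdef]
        field_simp
      rw [← h2] at h3
      rw [h4, h5] at h3
      linarith [norm_nonneg (g 0)]
    have : (Submodule.orthogonalProjection K (deriv f 0) : 𝕘) = 0 := by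
      rw [← hQ]; exact hc
    exact Subtype.ext this
  · intro hproj
    have hc : c = 0 := by
      rw [hcdef, hQ, hproj]
      simp
    refine ⟨‖g 0‖ + M, ?_⟩
    intro t _
    have hsplit : f t = g t + h t := by simp [hhdef]
    have hgt : g t = g 0 := by rw [haffine t, hc, smul_zero, add_zero]
    calc ‖f t‖ = ‖g t + h t‖ := by rw [← hsplit]
    _ ≤ ‖g t‖ + ‖h t‖ := norm_add_le _ _
    _ ≤ ‖g 0‖ + M := by rw [hgt]; exact add_le_add le_rfl (hhbound t)
end

section
/- Let 𝔤 be a finite-dimensional real Lie algebra with an ad-invariant inner product, let X ∈ 𝔤, and let f : ℝ → 𝔤 be a twice continuously differentiable solution of f''(t) = (1/4)⁅X, ⁅X, f(t)⁆⁆ that is bounded in norm on [0, ∞). If w ∈ 𝔤 satisfies ⁅X, w⁆ = 0 and ⟪f(0), w⟫ = 0, then ⟪f(t), w⟫ = 0 for all t ∈ ℝ. -/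
open scoped RealInnerProductSpace

/-- Let `𝕘` be a finite-dimensional real Lie algebra with an
ad-invariant inner product, `X ∈ 𝕘`, and `f : ℝ → 𝕘` a `C²` solution of
`f'' t = (1/4) ⁅X, ⁅X, f t⁆⁆` that is bounded in norm on `[0, ∞)`.  If `⁅X, w⁆ = 0`
and `⟪f 0, w⟫ = 0`, then `⟪f t, w⟫ = 0` for all `t`. -/
theorem jacobi_bounded_stays_orthogonal
    {𝕘 : Type*} [NormedAddCommGroup 𝕘] [InnerProductSpace ℝ 𝕘] [FiniteDimensional ℝ 𝕘]
    (bracket : 𝕘 →ₗ[ℝ] 𝕘 →ₗ[ℝ] 𝕘)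
    (bracket_alt : ∀ x : 𝕘, bracket x x = 0)
    (bracket_jacobi : ∀ x y z : 𝕘,
      bracket x (bracket y z) + bracket y (bracket z x) + bracket z (bracket x y) = 0)
    (ad_invariant : ∀ Z X Y : 𝕘, ⟪bracket Z X, Y⟫ + ⟪X, bracket Z Y⟫ = 0)
    (X : 𝕘) (f : ℝ → 𝕘)
    (hf : ContDiff ℝ 2 f)
    (hJacobi : ∀ t : ℝ, deriv (deriv f) t = (1/4 : ℝ) • bracket X (bracket X (f t)))
    (hbounded : ∃ C : ℝ, ∀ t : ℝ, 0 ≤ t → ‖f t‖ ≤ C)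
    (w : 𝕘) (hw : bracket X w = 0) (h0 : ⟪f 0, w⟫ = 0) :
    ∀ t : ℝ, ⟪f t, w⟫ = 0 := by
  -- f differentiable, deriv f differentiable
  have h2 := contDiff_succ_iff_deriv.mp (show ContDiff ℝ (1+1) f by exact_mod_cast hf)
  have h2 : Differentiable ℝ f ∧ ContDiff ℝ 1 (deriv f) := ⟨h2.1, h2.2.2⟩
  have hdf : Differentiable ℝ (deriv f) := h2.2.differentiable one_ne_zero
  set g : ℝ → ℝ := fun t => ⟪f t, w⟫ with hg
  have hgd : ∀ t, HasDerivAt g ⟪deriv f t, w⟫ t := by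
    intro t
    have := ((h2.1 t).hasDerivAt.inner ℝ (hasDerivAt_const t w))
    simpa using this
  have hgd2 : ∀ t, HasDerivAt (fun t => ⟪deriv f t, w⟫) 0 t := by
    intro t
    have := ((hdf t).hasDerivAt.inner ℝ (hasDerivAt_const t w))
    have hz : ⟪deriv (deriv f) t, w⟫ = 0 := by
      rw [hJacobi t, real_inner_smul_left]
      have := ad_invariant X (bracket X (f t)) w
      rw [hw] at this
      simp at this
      simp [this]
    simpa [hz] using this
  -- deriv g is constant
  have hderivg : ∀ t, deriv g t = ⟪deriv f t, w⟫ := fun t => (hgd t).deriv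
  set c : ℝ := ⟪deriv f 0, w⟫ with hc
  have hconst : ∀ t : ℝ, ⟪deriv f t, w⟫ = c := by
    intro t
    have : ∀ s : ℝ, deriv (fun t => ⟪deriv f t, w⟫) s = 0 := fun s => (hgd2 s).deriv
    have := is_const_of_deriv_eq_zero (fun s => (hgd2 s).differentiableAt) this t 0
    simpa [hc] using this
  -- g t = c * t
  have hlin : ∀ t : ℝ, g t = c * t := by
    intro t
    have hh : ∀ s : ℝ, HasDerivAt (fun s => g s - c * s) 0 s := by
      intro s
      have := (hgd s).sub ((hasDerivAt_id s).const_mul c)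
      rw [hconst s, mul_one, sub_self] at this
      exact this
    have := is_const_of_deriv_eq_zero (fun s => (hh s).differentiableAt)
      (fun s => (hh s).deriv) t 0
    simp only [mul_zero, sub_zero] at this
    have hg0 : g 0 = 0 := h0
    linarith [this, hg0]
  -- boundedness forces c = 0
  obtain ⟨C, hC⟩ := hbounded
  have hcz : c = 0 := by
    by_contra hne
    set M := max C 0 * ‖w‖ with hM
    have hMnn : 0 ≤ M := mul_nonneg (le_max_right _ _) (norm_nonneg _)
    have hbd : ∀ t : ℝ, 0 ≤ t → |c * t| ≤ M := by
      intro t ht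
      rw [← hlin t]
      calc |g t| ≤ ‖f t‖ * ‖w‖ := by
            simpa using abs_real_inner_le_norm (f t) w
        _ ≤ M := by
            apply mul_le_mul_of_nonneg_right _ (norm_nonneg _)
            exact (hC t ht).trans (le_max_left _ _)
    have ht0 : (0:ℝ) ≤ (M + 1) / |c| := div_nonneg (by linarith) (abs_nonneg _)
    have := hbd ((M + 1) / |c|) ht0
    rw [abs_mul, abs_div, abs_abs, abs_of_nonneg (show (0:ℝ) ≤ M+1 by linarith),
      mul_comm, div_mul_cancel₀ _ (abs_ne_zero.mpr hne)] at this
    linarith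
  intro t
  have := hlin t
  simpa [hcz] using this
end
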